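/- For each n ≥ 2, the vector v ∈ ℝ^{2^n} whose entry at index with binary expansion b = (b_{n-1},…,b_0) is v_b = Σ_{j=1}^{n-1} 2^{j-1}(1 − 2b_j) + (1 − 2b_0) (i.e., the S&S diagonal of the product state with biases 2^{n-2}ε₀,…,2ε₀,ε₀,ε₀) is invariant under the reset map R and is sorted in nonincreasing order when entries are listed by decreasing value of the signed sum; hence it is a fixed point of the PPA at leading order. -/

import Mathlib

private lemma sum_two_pow_testBit (n : ℕ) : ∀ m : ℕ, m < 2 ^ n →
    (∑ j ∈ Finset.range n, 2 ^ j * (if m.testBit j then (1:ℕ) else 0)) = m := by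
  induction n with
  | zero => intro m hm; interval_cases m; simp
  | succ n ih =>
    intro m hm
    rw [Finset.sum_range_succ']
    have h2 : ∀ j, m.testBit (j + 1) = (m / 2).testBit j := by
      intro j; rw [Nat.testBit_succ]
    have hsum : (∑ j ∈ Finset.range n, 2 ^ (j+1) * (if m.testBit (j+1) then (1:ℕ) else 0))
        = 2 * ∑ j ∈ Finset.range n, 2 ^ j * (if (m / 2).testBit j then (1:ℕ) else 0) := by
      rw [Finset.mul_sum]
      refine Finset.sum_congr rfl fun j _ => ?_
      rw [h2, pow_succ]; ring
    have hdiv : m / 2 < 2 ^ n := by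
      rw [pow_succ] at hm; omega
    rw [hsum, ih (m / 2) hdiv]
    have hb : (if m.testBit 0 then (1:ℕ) else 0) = m % 2 := by
      rw [Nat.testBit_zero]
      rcases Nat.mod_two_eq_zero_or_one m with h | h <;> simp [h]
    simp only [pow_zero, one_mul, hb]
    omega

private lemma sum_coeff (n : ℕ) (hn : 1 ≤ n) :
    (∑ j ∈ Finset.range n, (if j = 0 then (1 : ℝ) else 2 ^ (j - 1)))
      = 2 ^ (n - 1) := by
  induction n with
  | zero => omega
  | succ k ih =>
    rcases Nat.eq_zero_or_pos k with rfl | hk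
    · simp
    · rw [Finset.sum_range_succ, ih hk]
      have hk1 : k ≠ 0 := hk.ne'
      rw [if_neg hk1]
      simp only [Nat.succ_sub_one]
      have : (2:ℝ) ^ k = 2 ^ (k-1) + 2 ^ (k-1) := by
        rw [← two_mul, ← pow_succ']; congr 1; omega
      rw [this]

private lemma key (n : ℕ) (hn : 1 ≤ n) (m : ℕ) (hm : m < 2 ^ n) :
    (∑ j ∈ Finset.range n,
        (if j = 0 then (1 : ℝ) else 2 ^ (j - 1)) *
          (1 - 2 * (if m.testBit j then (1 : ℝ) else 0)))
      = 2 ^ (n - 1) - m - (if m.testBit 0 then (1:ℝ) else 0) := by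
  have hsum : (∑ j ∈ Finset.range n, 2 ^ j * (if m.testBit j then (1:ℝ) else 0)) = m := by
    exact_mod_cast sum_two_pow_testBit n m hm
  have expand : ∀ j ∈ Finset.range n,
      (if j = 0 then (1 : ℝ) else 2 ^ (j - 1)) *
          (1 - 2 * (if m.testBit j then (1 : ℝ) else 0))
      = (if j = 0 then (1 : ℝ) else 2 ^ (j - 1))
        - (2 ^ j * (if m.testBit j then (1:ℝ) else 0)
           + (if j = 0 then (if m.testBit 0 then (1:ℝ) else 0) else 0)) := by
    intro j _
    rcases Nat.eq_zero_or_pos j with rfl | hj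
    · by_cases hb : m.testBit 0 <;> simp [hb] <;> ring
    · have hj0 : j ≠ 0 := hj.ne'
      have h2 : (2:ℝ) ^ j = 2 * 2 ^ (j - 1) := by
        rw [← pow_succ']; congr 1; omega
      simp only [if_neg hj0, h2]; ring
  rw [Finset.sum_congr rfl expand, Finset.sum_sub_distrib, Finset.sum_add_distrib, hsum,
    sum_coeff n hn]
  have h2 : (∑ j ∈ Finset.range n, (if j = 0 then (if m.testBit 0 then (1:ℝ) else 0) else 0))
      = (if m.testBit 0 then (1:ℝ) else 0) := by
    rw [Finset.sum_ite_eq' (Finset.range n) 0,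
      if_pos (Finset.mem_range.mpr (by omega))]
  rw [h2]; ring

theorem allBonacci_diagonal_PPA_fixed_point (n : ℕ) (hn : 2 ≤ n)
    (v : ℕ → ℝ)
    (hv : ∀ m : ℕ, v m =
      ∑ j ∈ Finset.range n,
        (if j = 0 then (1 : ℝ) else 2 ^ (j - 1)) *
          (1 - 2 * (if m.testBit j then (1 : ℝ) else 0))) :
    (∀ m m' : ℕ, m ≤ m' → m' < 2 ^ n → v m' ≤ v m) ∧
    (∀ i : ℕ, 2 * i + 1 < 2 ^ n →
      v (2 * i) = (v (2 * i) + v (2 * i + 1)) / 2 + 1 ∧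
      v (2 * i + 1) = (v (2 * i) + v (2 * i + 1)) / 2 - 1) := by
  have hn1 : 1 ≤ n := by omega
  have hval : ∀ m, m < 2 ^ n → v m = 2 ^ (n - 1) - m - (if m.testBit 0 then (1:ℝ) else 0) := by
    intro m hm; rw [hv m, key n hn1 m hm]
  constructor
  · intro m m' hle hm'
    have hm : m < 2 ^ n := lt_of_le_of_lt hle hm'
    rw [hval m hm, hval m' hm']
    rcases eq_or_lt_of_le hle with rfl | hlt
    · exact le_refl _
    · have h : (m:ℝ) + 1 ≤ m' := by exact_mod_cast hlt
      split <;> split <;> linarith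
  · intro i hi
    have h0 : ¬ (2 * i).testBit 0 := by simp [Nat.testBit_zero, Nat.mul_mod_right]
    have h1 : (2 * i + 1).testBit 0 := by
      simp [Nat.testBit_zero]
    rw [hval (2*i) (by omega), hval (2*i+1) hi, if_neg h0, if_pos h1]
    push_cast
    constructor <;> ring
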